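/- Let H be a thin spider with partition (S, K, R) such that the subgraph of H induced by R is P4-sparse, let u ∈ K, and let uw be a tail added to H (w ∉ V(H)). Then the minimum number of fill edges (excluding the tail uw) in a P4-sparse completion of H+uw equals |K| − 1. -/

import Mathlib

open SimpleGraph Set

variable {α : Type*}

/-- The graph `G + uw` obtained from `G` by adding the tail edge `uw`. -/
def addTail (G : SimpleGraph α) (u w : α) : SimpleGraph α :=
  G ⊔ SimpleGraph.fromEdgeSet {s(u, w)}

/-- The number of fill edges of a completion `G'` of the base graph `base`:
the edges of `G'` that are not edges of `base`. -/
noncomputable def fillCount (base G' : SimpleGraph α) : ℕ :=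
  (G'.edgeSet \ base.edgeSet).ncard

/-- `S` is an independent set of the graph `G`. -/
def IsIndepSetOn (G : SimpleGraph α) (S : Set α) : Prop :=
  ∀ x ∈ S, ∀ y ∈ S, ¬ G.Adj x y

/-- A graph is split if its vertex set can be partitioned into a clique and an
independent set. -/
def IsSplitGraph (G : SimpleGraph α) : Prop :=
  ∃ K S : Set α, K ∪ S = Set.univ ∧ Disjoint K S ∧ G.IsClique K ∧ IsIndepSetOn G S

/-- `a b c d` (in this order) induce a chordless path `P₄` in `G`. -/
def IsInducedP4 (G : SimpleGraph α) (a b c d : α) : Prop :=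
  a ≠ b ∧ a ≠ c ∧ a ≠ d ∧ b ≠ c ∧ b ≠ d ∧ c ≠ d ∧
  G.Adj a b ∧ G.Adj b c ∧ G.Adj c d ∧ ¬ G.Adj a c ∧ ¬ G.Adj a d ∧ ¬ G.Adj b d

/-- `a b c d` (in this order) induce a chordless cycle `C₄` in `G`. -/
def IsInducedC4 (G : SimpleGraph α) (a b c d : α) : Prop :=
  a ≠ b ∧ a ≠ c ∧ a ≠ d ∧ b ≠ c ∧ b ≠ d ∧ c ≠ d ∧
  G.Adj a b ∧ G.Adj b c ∧ G.Adj c d ∧ G.Adj d a ∧ ¬ G.Adj a c ∧ ¬ G.Adj b d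

/-- `a b c d` induce a `2K₂` (two independent edges `ab` and `cd`) in `G`. -/
def IsInduced2K2 (G : SimpleGraph α) (a b c d : α) : Prop :=
  a ≠ b ∧ a ≠ c ∧ a ≠ d ∧ b ≠ c ∧ b ≠ d ∧ c ≠ d ∧
  G.Adj a b ∧ G.Adj c d ∧ ¬ G.Adj a c ∧ ¬ G.Adj a d ∧ ¬ G.Adj b c ∧ ¬ G.Adj b d

/-- A graph is threshold iff it has no induced `C₄`, `P₄`, or `2K₂`. -/
def IsThresholdGraph (G : SimpleGraph α) : Prop :=
  (∀ a b c d, ¬ IsInducedC4 G a b c d) ∧ (∀ a b c d, ¬ IsInducedP4 G a b c d) ∧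
  (∀ a b c d, ¬ IsInduced2K2 G a b c d)

/-- A graph is quasi-threshold iff it has no induced `C₄` or `P₄`. -/
def IsQuasiThresholdGraph (G : SimpleGraph α) : Prop :=
  (∀ a b c d, ¬ IsInducedC4 G a b c d) ∧ (∀ a b c d, ¬ IsInducedP4 G a b c d)

/-- `t` is the vertex set of an induced `P₄` of `G`. -/
def IsP4SetOn (G : SimpleGraph α) (t : Set α) : Prop :=
  ∃ a b c d : α, t = {a, b, c, d} ∧ IsInducedP4 G a b c d

/-- A graph is `P₄`-sparse iff every set of five vertices induces at most one `P₄`. -/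
def IsP4Sparse (G : SimpleGraph α) : Prop :=
  ∀ s : Set α, s.ncard = 5 →
    ∀ t₁ ⊆ s, ∀ t₂ ⊆ s, IsP4SetOn G t₁ → IsP4SetOn G t₂ → t₁ = t₂

/-- The subgraph of `H` induced by the set `R` (as a graph on the same vertex type,
all vertices outside `R` being isolated). -/
def restrictSet (H : SimpleGraph α) (R : Set α) : SimpleGraph α where
  Adj x y := H.Adj x y ∧ x ∈ R ∧ y ∈ R
  symm := ⟨fun x y ⟨h, hx, hy⟩ => ⟨h.symm, hy, hx⟩⟩
  loopless := ⟨fun x h => H.loopless.irrefl x h.1⟩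

/-- `(S, K, R)` is a thin-spider partition of (the vertex set of) `H`. -/
def ThinSpider (H : SimpleGraph α) (S K R : Set α) : Prop :=
  IsIndepSetOn H S ∧ H.IsClique K ∧ S.ncard = K.ncard ∧ 2 ≤ K.ncard ∧
  Disjoint S K ∧ Disjoint S R ∧ Disjoint K R ∧
  (∀ r ∈ R, ∀ k ∈ K, H.Adj r k) ∧ (∀ r ∈ R, ∀ s ∈ S, ¬ H.Adj r s) ∧
  ∃ f : α → α, Set.BijOn f S K ∧ ∀ s ∈ S, ∀ k ∈ K, (H.Adj s k ↔ k = f s)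

/-- `(S, K, R)` is a thick-spider partition of (the vertex set of) `H`;
thick spiders are assumed to have `|K| ≥ 3`. -/
def ThickSpider (H : SimpleGraph α) (S K R : Set α) : Prop :=
  IsIndepSetOn H S ∧ H.IsClique K ∧ S.ncard = K.ncard ∧ 3 ≤ K.ncard ∧
  Disjoint S K ∧ Disjoint S R ∧ Disjoint K R ∧
  (∀ r ∈ R, ∀ k ∈ K, H.Adj r k) ∧ (∀ r ∈ R, ∀ s ∈ S, ¬ H.Adj r s) ∧
  ∃ f : α → α, Set.BijOn f S K ∧ ∀ s ∈ S, ∀ k ∈ K, (H.Adj s k ↔ k ≠ f s)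

/-- The set of possible numbers of fill edges of completions of `base` into the
graph class `C`. -/
def completionFills (C : SimpleGraph α → Prop) (base : SimpleGraph α) : Set ℕ :=
  {n | ∃ G' : SimpleGraph α, base ≤ G' ∧ C G' ∧ fillCount base G' = n}
section AuxLemmas

variable [Fintype α]

@[simp] lemma restrictSet_adj (H : SimpleGraph α) (R : Set α) (x y : α) :
    (restrictSet H R).Adj x y ↔ H.Adj x y ∧ x ∈ R ∧ y ∈ R := Iff.rfl

lemma ncard3 {a b c : α} (hab : a ≠ b) (hac : a ≠ c) (hbc : b ≠ c) :
    ({a, b, c} : Set α).ncard = 3 := by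
  rw [Set.ncard_insert_of_notMem (by simp [hab, hac]),
      Set.ncard_insert_of_notMem (by simp [hbc]), Set.ncard_singleton]

lemma three_three_in_five {s A B : Set α} (hs : s.ncard = 5) (hA : A ⊆ s) (hB : B ⊆ s)
    (hd : ∀ x ∈ A, x ∉ B) (cA : A.ncard = 3) (cB : B.ncard = 3) : False := by
  have hdisj : Disjoint A B := Set.disjoint_left.mpr hd
  have hsub : A ∪ B ⊆ s := Set.union_subset hA hB
  have := Set.ncard_le_ncard hsub (Set.toFinite _)
  rw [Set.ncard_union_eq hdisj, cA, cB, hs] at this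
  omega

lemma four_four_in_five {s t₁ t₂ : Set α} (hs : s.ncard = 5) (h1 : t₁ ⊆ s) (h2 : t₂ ⊆ s)
    (hd : ∀ x ∈ t₁, x ∉ t₂) (c1 : t₁.ncard = 4) (c2 : t₂.ncard = 4) : False := by
  have hsub : t₂ ⊆ s \ t₁ := fun x hx => ⟨h2 hx, fun hx1 => hd x hx1 hx⟩
  have := Set.ncard_le_ncard hsub (Set.toFinite _)
  rw [Set.ncard_diff h1, hs, c1, c2] at this
  omega

/-- Classification of induced `P₄`s in a thin spider covering the whole vertex type. -/
lemma spider_p4_classify {H : SimpleGraph α} {S K R : Set α} {f : α → α}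
    (hS : IsIndepSetOn H S) (hK : H.IsClique K)
    (hRK : ∀ r ∈ R, ∀ k ∈ K, H.Adj r k) (hRS : ∀ r ∈ R, ∀ s ∈ S, ¬ H.Adj r s)
    (hf : Set.BijOn f S K) (hfadj : ∀ s ∈ S, ∀ k ∈ K, (H.Adj s k ↔ k = f s))
    (hcover : S ∪ K ∪ R = Set.univ)
    {a b c d : α} (h : IsInducedP4 H a b c d) :
    (a ∈ R ∧ b ∈ R ∧ c ∈ R ∧ d ∈ R) ∨ (a ∈ S ∧ d ∈ S ∧ b = f a ∧ c = f d) := by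
  have hmem : ∀ x : α, x ∈ S ∨ x ∈ K ∨ x ∈ R := by
    intro x
    have : x ∈ S ∪ K ∪ R := hcover ▸ Set.mem_univ x
    simpa [Set.mem_union, or_assoc] using this
  have adjS : ∀ s₀ ∈ S, ∀ x, H.Adj s₀ x → x = f s₀ := by
    intro s₀ hs₀ x hadj
    rcases hmem x with hx | hx | hx
    · exact absurd hadj (hS s₀ hs₀ x hx)
    · exact (hfadj s₀ hs₀ x hx).1 hadj
    · exact absurd hadj.symm (hRS x hx s₀ hs₀)
  obtain ⟨hab, hac, had, hbc, hbd, hcd, eab, ebc, ecd, nac, nad, nbd⟩ := h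
  have hbS : b ∉ S := fun hb => hac ((adjS b hb a eab.symm).trans (adjS b hb c ebc).symm)
  have hcS : c ∉ S := fun hc => hbd ((adjS c hc b ebc.symm).trans (adjS c hc d ecd).symm)
  by_cases haS : a ∈ S
  · right
    have hb : b = f a := adjS a haS b eab
    have hbK : b ∈ K := hb ▸ hf.mapsTo haS
    have hdS : d ∈ S := by
      rcases hmem d with h | h | h
      · exact h
      · exact absurd (hK hbK h hbd) nbd
      · exact absurd (hRK d h b hbK).symm nbd
    exact ⟨haS, hdS, hb, adjS d hdS c ecd.symm⟩
  · by_cases hdS : d ∈ S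
    · exfalso
      have hc : c = f d := adjS d hdS c ecd.symm
      have hcK : c ∈ K := hc ▸ hf.mapsTo hdS
      rcases hmem a with h | h | h
      · exact haS h
      · exact nac (hK h hcK hac)
      · exact nac (hRK a h c hcK)
    · left
      have haR : a ∈ R := by
        rcases hmem a with h | h | h
        · exact absurd h haS
        · exfalso
          rcases hmem c with h' | h' | h'
          · exact hcS h'
          · exact nac (hK h h' hac)
          · exact nac ((hRK c h' a h).symm)
        · exact h
      have hbR : b ∈ R := by
        rcases hmem b with h | h | h
        · exact absurd h hbS
        · exfalso
          rcases hmem d with h' | h' | h'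
          · exact hdS h'
          · exact nbd (hK h h' hbd)
          · exact nbd ((hRK d h' b h).symm)
        · exact h
      have hcR : c ∈ R := by
        rcases hmem c with h | h | h
        · exact absurd h hcS
        · exact absurd (hRK a haR c h) nac
        · exact h
      have hdR : d ∈ R := by
        rcases hmem d with h | h | h
        · exact absurd h hdS
        · exact absurd (hRK b hbR d h) nbd
        · exact h
      exact ⟨haR, hbR, hcR, hdR⟩

end AuxLemmas
section AuxLemmas2

variable [Fintype α]

lemma ncard4 {a b c d : α} (hab : a ≠ b) (hac : a ≠ c) (had : a ≠ d) (hbc : b ≠ c)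
    (hbd : b ≠ d) (hcd : c ≠ d) : ({a, b, c, d} : Set α).ncard = 4 := by
  rw [Set.ncard_insert_of_notMem (by simp [hab, hac, had]),
      Set.ncard_insert_of_notMem (by simp [hbc, hbd]), Set.ncard_pair hcd]

lemma ncard5 {a b c d e : α} (hab : a ≠ b) (hac : a ≠ c) (had : a ≠ d) (hae : a ≠ e)
    (hbc : b ≠ c) (hbd : b ≠ d) (hbe : b ≠ e) (hcd : c ≠ d) (hce : c ≠ e) (hde : d ≠ e) :
    ({a, b, c, d, e} : Set α).ncard = 5 := by
  rw [Set.ncard_insert_of_notMem (by simp [hab, hac, had, hae]),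
      Set.ncard_insert_of_notMem (by simp [hbc, hbd, hbe]),
      Set.ncard_insert_of_notMem (by simp [hcd, hce]), Set.ncard_pair hde]

lemma p4_restrict {H : SimpleGraph α} {R : Set α} {a b c d : α}
    (h : IsInducedP4 H a b c d) (ha : a ∈ R) (hb : b ∈ R) (hc : c ∈ R) (hd : d ∈ R) :
    IsInducedP4 (restrictSet H R) a b c d := by
  obtain ⟨hab, hac, had, hbc, hbd, hcd, eab, ebc, ecd, nac, nad, nbd⟩ := h
  exact ⟨hab, hac, had, hbc, hbd, hcd, ⟨eab, ha, hb⟩, ⟨ebc, hb, hc⟩, ⟨ecd, hc, hd⟩,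
    fun h' => nac h'.1, fun h' => nad h'.1, fun h' => nbd h'.1⟩

/-- A thin spider (covering the whole vertex type) whose head is `P₄`-sparse is `P₄`-sparse. -/
lemma spider_sparse {H : SimpleGraph α} {S K R : Set α} {f : α → α}
    (hS : IsIndepSetOn H S) (hK : H.IsClique K)
    (hSK : Disjoint S K) (hSR : Disjoint S R) (hKR : Disjoint K R)
    (hRK : ∀ r ∈ R, ∀ k ∈ K, H.Adj r k) (hRS : ∀ r ∈ R, ∀ s ∈ S, ¬ H.Adj r s)
    (hf : Set.BijOn f S K) (hfadj : ∀ s ∈ S, ∀ k ∈ K, (H.Adj s k ↔ k = f s))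
    (hcover : S ∪ K ∪ R = Set.univ)
    (hRsp : IsP4Sparse (restrictSet H R)) : IsP4Sparse H := by
  intro s hs t₁ ht₁ t₂ ht₂ hp₁ hp₂
  obtain ⟨a, b, c, d, rfl, h₁⟩ := hp₁
  obtain ⟨a', b', c', d', rfl, h₂⟩ := hp₂
  rcases spider_p4_classify hS hK hRK hRS hf hfadj hcover h₁ with hR₁ | ⟨haS, hdS, hb, hc⟩ <;>
    rcases spider_p4_classify hS hK hRK hRS hf hfadj hcover h₂ with hR₂ | ⟨haS', hdS', hb', hc'⟩
  · -- both P4s live in R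
    exact hRsp s hs _ ht₁ _ ht₂
      ⟨a, b, c, d, rfl, p4_restrict h₁ hR₁.1 hR₁.2.1 hR₁.2.2.1 hR₁.2.2.2⟩
      ⟨a', b', c', d', rfl, p4_restrict h₂ hR₂.1 hR₂.2.1 hR₂.2.2.1 hR₂.2.2.2⟩
  · -- t₁ in R, t₂ spider-type : impossible
    subst hb' hc'
    exfalso
    refine four_four_in_five hs ht₁ ht₂ ?_
      (ncard4 h₁.1 h₁.2.1 h₁.2.2.1 h₁.2.2.2.1 h₁.2.2.2.2.1 h₁.2.2.2.2.2.1)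
      (ncard4 h₂.1 h₂.2.1 h₂.2.2.1 h₂.2.2.2.1 h₂.2.2.2.2.1 h₂.2.2.2.2.2.1)
    intro p hp hp2
    have hpR : p ∈ R := by
      rcases hp with rfl | rfl | rfl | rfl
      exacts [hR₁.1, hR₁.2.1, hR₁.2.2.1, hR₁.2.2.2]
    rcases hp2 with rfl | rfl | rfl | rfl
    · exact Set.disjoint_left.mp hSR haS' hpR
    · exact Set.disjoint_left.mp hKR (hf.mapsTo haS') hpR
    · exact Set.disjoint_left.mp hKR (hf.mapsTo hdS') hpR
    · exact Set.disjoint_left.mp hSR hdS' hpR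
  · -- t₁ spider-type, t₂ in R : impossible
    subst hb hc
    exfalso
    refine four_four_in_five hs ht₂ ht₁ ?_
      (ncard4 h₂.1 h₂.2.1 h₂.2.2.1 h₂.2.2.2.1 h₂.2.2.2.2.1 h₂.2.2.2.2.2.1)
      (ncard4 h₁.1 h₁.2.1 h₁.2.2.1 h₁.2.2.2.1 h₁.2.2.2.2.1 h₁.2.2.2.2.2.1)
    intro p hp hp2
    have hpR : p ∈ R := by
      rcases hp with rfl | rfl | rfl | rfl
      exacts [hR₂.1, hR₂.2.1, hR₂.2.2.1, hR₂.2.2.2]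
    rcases hp2 with rfl | rfl | rfl | rfl
    · exact Set.disjoint_left.mp hSR haS hpR
    · exact Set.disjoint_left.mp hKR (hf.mapsTo haS) hpR
    · exact Set.disjoint_left.mp hKR (hf.mapsTo hdS) hpR
    · exact Set.disjoint_left.mp hSR hdS hpR
  · -- both spider-type
    subst hb hc hb' hc'
    by_contra hne
    have hinj := hf.injOn
    have had : a ≠ d := h₁.2.2.1
    have had' : a' ≠ d' := h₂.2.2.1
    have hSparts : ¬ (a' ∈ ({a, d} : Set α) ∧ d' ∈ ({a, d} : Set α)) := by
      rintro ⟨h1, h2⟩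
      simp only [Set.mem_insert_iff, Set.mem_singleton_iff] at h1 h2
      rcases h1 with h1 | h1 <;> rcases h2 with h2 | h2
      · exact had' (h1.trans h2.symm)
      · exact hne (by rw [h1, h2])
      · exact hne (by rw [h1, h2]; ext p; simp; tauto)
      · exact had' (h1.trans h2.symm)
    have hKparts : ¬ (f a' ∈ ({f a, f d} : Set α) ∧ f d' ∈ ({f a, f d} : Set α)) := by
      rintro ⟨h1, h2⟩
      simp only [Set.mem_insert_iff, Set.mem_singleton_iff] at h1 h2
      apply hSparts
      constructor
      · rcases h1 with h | h
        · exact Or.inl (hinj haS' haS h)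
        · exact Or.inr (hinj haS' hdS h)
      · rcases h2 with h | h
        · exact Or.inl (hinj hdS' haS h)
        · exact Or.inr (hinj hdS' hdS h)
    obtain ⟨x, hxS, hxs, hxa, hxd⟩ : ∃ x, x ∈ S ∧ x ∈ s ∧ x ≠ a ∧ x ≠ d := by
      by_cases h : a' ∈ ({a, d} : Set α)
      · have h' : d' ∉ ({a, d} : Set α) := fun h'' => hSparts ⟨h, h''⟩
        exact ⟨d', hdS', ht₂ (by simp), fun he => h' (by simp [he]), fun he => h' (by simp [he])⟩
      · exact ⟨a', haS', ht₂ (by simp), fun he => h (by simp [he]), fun he => h (by simp [he])⟩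
    obtain ⟨y, hyK, hys, hya, hyd⟩ : ∃ y, y ∈ K ∧ y ∈ s ∧ y ≠ f a ∧ y ≠ f d := by
      by_cases h : f a' ∈ ({f a, f d} : Set α)
      · have h' : f d' ∉ ({f a, f d} : Set α) := fun h'' => hKparts ⟨h, h''⟩
        exact ⟨f d', hf.mapsTo hdS', ht₂ (by simp), fun he => h' (by simp [he]),
          fun he => h' (by simp [he])⟩
      · exact ⟨f a', hf.mapsTo haS', ht₂ (by simp), fun he => h (by simp [he]),
          fun he => h (by simp [he])⟩
    refine three_three_in_five hs (A := {a, d, x}) (B := {f a, f d, y}) ?_ ?_ ?_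
      (ncard3 had (Ne.symm hxa) (Ne.symm hxd))
      (ncard3 (fun h => had (hinj haS hdS h)) (Ne.symm hya) (Ne.symm hyd))
    · intro p hp
      rcases hp with rfl | rfl | rfl
      exacts [ht₁ (by simp), ht₁ (by simp), hxs]
    · intro p hp
      rcases hp with rfl | rfl | rfl
      exacts [ht₁ (by simp), ht₁ (by simp), hys]
    · intro p hp hpB
      have hpS : p ∈ S := by rcases hp with rfl | rfl | rfl; exacts [haS, hdS, hxS]
      have hpK : p ∈ K := by
        rcases hpB with rfl | rfl | rfl
        exacts [hf.mapsTo haS, hf.mapsTo hdS, hyK]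
      exact Set.disjoint_left.mp hSK hpS hpK

end AuxLemmas2
/-- tail at `u ∈ K` of a thin spider with `H[R]` P₄-sparse. -/
theorem thinSpider_tail_K [Fintype α]
    (H : SimpleGraph α) (u w : α) (S K R : Set α)
    (hspider : ThinSpider H S K R)
    (hcover : S ∪ K ∪ R = {w}ᶜ)
    (hw : ∀ x, ¬ H.Adj w x)
    (hRsparse : IsP4Sparse (restrictSet H R)) (hu : u ∈ K) :
    IsLeast (completionFills IsP4Sparse (addTail H u w)) (K.ncard - 1) := by
  classical
  obtain ⟨hS, hK, hcard, hK2, hSK, hSR, hKR, hRK, hRS, f, hf, hfadj⟩ := hspider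
  have hwmem : w ∉ S ∪ K ∪ R := by rw [hcover]; simp
  have hwS : w ∉ S := fun h => hwmem (Or.inl (Or.inl h))
  have hwK : w ∉ K := fun h => hwmem (Or.inl (Or.inr h))
  have hwR : w ∉ R := fun h => hwmem (Or.inr h)
  have huw : u ≠ w := fun h => hwK (h ▸ hu)
  set base := addTail H u w with hbase
  have hbase_adj : ∀ x y, base.Adj x y ↔ H.Adj x y ∨ (x = u ∧ y = w) ∨ (x = w ∧ y = u) := by
    intro x y
    simp only [hbase, addTail, sup_adj, fromEdgeSet_adj, Set.mem_singleton_iff, Sym2.eq_iff]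
    constructor
    · rintro (h | ⟨⟨rfl, rfl⟩ | ⟨rfl, rfl⟩, hne⟩)
      · exact Or.inl h
      · exact Or.inr (Or.inl ⟨rfl, rfl⟩)
      · exact Or.inr (Or.inr ⟨rfl, rfl⟩)
    · rintro (h | ⟨rfl, rfl⟩ | ⟨rfl, rfl⟩)
      · exact Or.inl h
      · exact Or.inr ⟨Or.inl ⟨rfl, rfl⟩, huw⟩
      · exact Or.inr ⟨Or.inr ⟨rfl, rfl⟩, huw.symm⟩
  constructor
  · -- MEMBERSHIP: the completion adding all edges from `w` to `K`
    set G₀ : SimpleGraph α := H ⊔ SimpleGraph.fromEdgeSet ((fun k => s(w, k)) '' K) with hG0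
    have hG0adj : ∀ x y, G₀.Adj x y ↔ H.Adj x y ∨ (x = w ∧ y ∈ K) ∨ (y = w ∧ x ∈ K) := by
      intro x y
      simp only [hG0, sup_adj, fromEdgeSet_adj, Set.mem_image, Sym2.eq_iff]
      constructor
      · rintro (h | ⟨⟨k, hk, ⟨h1, h2⟩ | ⟨h1, h2⟩⟩, hne⟩)
        · exact Or.inl h
        · exact Or.inr (Or.inl ⟨h1.symm, h2 ▸ hk⟩)
        · exact Or.inr (Or.inr ⟨h1.symm, h2 ▸ hk⟩)
      · rintro (h | ⟨rfl, hy⟩ | ⟨rfl, hx⟩)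
        · exact Or.inl h
        · exact Or.inr ⟨⟨y, hy, Or.inl ⟨rfl, rfl⟩⟩, fun he => hwK (he ▸ hy)⟩
        · exact Or.inr ⟨⟨x, hx, Or.inr ⟨rfl, rfl⟩⟩, fun he => hwK (he ▸ hx)⟩
    have hle0 : base ≤ G₀ := by
      intro x y h
      rw [hbase_adj] at h
      rw [hG0adj]
      rcases h with h | ⟨rfl, rfl⟩ | ⟨rfl, rfl⟩
      · exact Or.inl h
      · exact Or.inr (Or.inr ⟨rfl, hu⟩)
      · exact Or.inr (Or.inl ⟨rfl, hu⟩)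
    have hsp0 : IsP4Sparse G₀ := by
      have hS0 : IsIndepSetOn G₀ S := by
        intro x hx y hy hadj
        rw [hG0adj] at hadj
        rcases hadj with h | ⟨h1, _⟩ | ⟨h1, _⟩
        · exact hS x hx y hy h
        · rw [h1] at hx; exact hwS hx
        · rw [h1] at hy; exact hwS hy
      have hRK0 : ∀ r ∈ insert w R, ∀ k ∈ K, G₀.Adj r k := by
        intro r hr k hk
        rw [hG0adj]
        rcases hr with rfl | hr
        · exact Or.inr (Or.inl ⟨rfl, hk⟩)
        · exact Or.inl (hRK r hr k hk)
      have hRS0 : ∀ r ∈ insert w R, ∀ s0 ∈ S, ¬ G₀.Adj r s0 := by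
        intro r hr s0 hs0 hadj
        rw [hG0adj] at hadj
        rcases hadj with h | ⟨_, h⟩ | ⟨h1, _⟩
        · rcases hr with rfl | hr
          · exact hw s0 h
          · exact hRS r hr s0 hs0 h
        · exact Set.disjoint_left.mp hSK hs0 h
        · rw [h1] at hs0; exact hwS hs0
      have hfadj0 : ∀ s0 ∈ S, ∀ k ∈ K, (G₀.Adj s0 k ↔ k = f s0) := by
        intro s0 hs0 k hk
        rw [hG0adj]
        constructor
        · rintro (h | ⟨h1, _⟩ | ⟨h1, _⟩)
          · exact (hfadj s0 hs0 k hk).1 h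
          · rw [h1] at hs0; exact absurd hs0 hwS
          · rw [h1] at hk; exact absurd hk hwK
        · intro h
          exact Or.inl ((hfadj s0 hs0 k hk).2 h)
      have hcover0 : S ∪ K ∪ insert w R = Set.univ := by
        apply Set.eq_univ_of_forall
        intro x
        rcases eq_or_ne x w with rfl | hx
        · exact Or.inr (Set.mem_insert _ _)
        · have hx' : x ∈ ({w}ᶜ : Set α) := by simpa using hx
          rw [← hcover] at hx'
          rcases hx' with h | h
          · exact Or.inl h
          · exact Or.inr (Set.mem_insert_of_mem _ h)
      have hG0w : ∀ y, y ∉ K → ¬ G₀.Adj w y := by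
        intro y hy hadj
        rw [hG0adj] at hadj
        rcases hadj with h | ⟨_, h⟩ | ⟨_, h⟩
        · exact hw y h
        · exact hy h
        · exact hwK h
      have hres : restrictSet G₀ (insert w R) = restrictSet H R := by
        ext x y
        constructor
        · rintro ⟨hadj, hx, hy⟩
          rcases hx with rfl | hx
          · exfalso
            refine hG0w y ?_ hadj
            rcases hy with rfl | hy
            · exact hwK
            · exact fun hk => Set.disjoint_left.mp hKR hk hy
          · rcases hy with rfl | hy
            · exfalso
              refine hG0w x ?_ hadj.symm
              exact fun hk => Set.disjoint_left.mp hKR hk hx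
            · refine ⟨?_, hx, hy⟩
              rw [hG0adj] at hadj
              rcases hadj with h | ⟨h1, _⟩ | ⟨h1, _⟩
              · exact h
              · rw [h1] at hx; exact absurd hx hwR
              · rw [h1] at hy; exact absurd hy hwR
        · rintro ⟨hadj, hx, hy⟩
          exact ⟨(hG0adj x y).2 (Or.inl hadj), Or.inr hx, Or.inr hy⟩
      exact spider_sparse hS0 (hK.mono le_sup_left)
        hSK (Set.disjoint_left.mpr fun x hx hm => by
          rcases hm with rfl | hm
          · exact hwS hx
          · exact Set.disjoint_left.mp hSR hx hm)
        (Set.disjoint_left.mpr fun x hx hm => by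
          rcases hm with rfl | hm
          · exact hwK hx
          · exact Set.disjoint_left.mp hKR hx hm)
        hRK0 hRS0 hf hfadj0 hcover0 (hres ▸ hRsparse)
    have hfill0 : fillCount base G₀ = K.ncard - 1 := by
      have hset : G₀.edgeSet \ base.edgeSet = (fun k => s(w, k)) '' (K \ {u}) := by
        ext e
        refine Sym2.ind (fun x y => ?_) e
        simp only [Set.mem_diff, mem_edgeSet, Set.mem_image, Set.mem_singleton_iff]
        constructor
        · rintro ⟨hadj, hnb⟩
          rw [hG0adj] at hadj
          rcases hadj with h | ⟨h1, h2⟩ | ⟨h1, h2⟩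
          · exact absurd ((hbase_adj x y).2 (Or.inl h)) hnb
          · refine ⟨y, ⟨h2, fun he => ?_⟩, by rw [h1]⟩
            exact hnb ((hbase_adj x y).2 (Or.inr (Or.inr ⟨h1, he⟩)))
          · refine ⟨x, ⟨h2, fun he => ?_⟩, by rw [h1, Sym2.eq_swap]⟩
            exact hnb ((hbase_adj x y).2 (Or.inr (Or.inl ⟨he, h1⟩)))
        · rintro ⟨k, ⟨hk, hku⟩, he⟩
          rw [Sym2.eq_iff] at he
          rcases he with ⟨h1, h2⟩ | ⟨h1, h2⟩
          · rw [← h1, ← h2]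
            refine ⟨(hG0adj w k).2 (Or.inr (Or.inl ⟨rfl, hk⟩)), fun hb => ?_⟩
            rw [hbase_adj] at hb
            rcases hb with h | ⟨h3, _⟩ | ⟨_, h4⟩
            · exact hw k h
            · exact hwK (h3 ▸ hu)
            · exact hku h4
          · rw [← h1, ← h2]
            refine ⟨(hG0adj k w).2 (Or.inr (Or.inr ⟨rfl, hk⟩)), fun hb => ?_⟩
            rw [hbase_adj] at hb
            rcases hb with h | ⟨h3, _⟩ | ⟨h4, _⟩
            · exact hw k h.symm
            · exact hku h3
            · exact hwK (h4 ▸ hk)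
      show (G₀.edgeSet \ base.edgeSet).ncard = K.ncard - 1
      rw [hset, Set.ncard_image_of_injOn, Set.ncard_diff_singleton_of_mem hu]
      intro k1 hk1 k2 hk2 he
      rw [Sym2.eq_iff] at he
      rcases he with ⟨_, h⟩ | ⟨h1, h2⟩
      · exact h
      · exfalso; rw [← h1] at hk2; exact hwK hk2.1
    exact ⟨G₀, hle0, hsp0, hfill0⟩
  · -- LOWER BOUND
    rintro n ⟨G', hle, hsp, rfl⟩
    have hsurj : ∀ k : α, ∃ s0, k ∈ K → (s0 ∈ S ∧ f s0 = k) := by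
      intro k
      by_cases hk : k ∈ K
      · obtain ⟨s0, hs0, hfs0⟩ := hf.surjOn hk
        exact ⟨s0, fun _ => ⟨hs0, hfs0⟩⟩
      · exact ⟨k, fun h => absurd h hk⟩
    choose g hg using hsurj
    have key : ∀ k, k ∈ K → k ≠ u → ∃ e, e ∈ G'.edgeSet \ base.edgeSet ∧
        (e = s(g u, k) ∨ e = s(g u, g k) ∨ e = s(u, g k) ∨ e = s(w, k) ∨ e = s(w, g k)) := by
      intro k hk hku
      obtain ⟨hsuS, hfsu⟩ := hg u hu
      obtain ⟨hskS, hfsk⟩ := hg k hk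
      have hsu_u : g u ≠ u := fun h => Set.disjoint_left.mp hSK (h ▸ hsuS) hu
      have hsu_k : g u ≠ k := fun h => Set.disjoint_left.mp hSK (h ▸ hsuS) hk
      have hsu_sk : g u ≠ g k := by
        intro h
        have : u = k := by rw [← hfsu, h, hfsk]
        exact hku this.symm
      have hsu_w : g u ≠ w := fun h => hwS (h ▸ hsuS)
      have hu_k : u ≠ k := Ne.symm hku
      have hu_sk : u ≠ g k := fun h => Set.disjoint_left.mp hSK (by rw [h]; exact hskS) hu
      have hk_sk : k ≠ g k := fun h => Set.disjoint_left.mp hSK (by rw [h]; exact hskS) hk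
      have hk_w : k ≠ w := fun h => hwK (h ▸ hk)
      have hsk_w : g k ≠ w := fun h => hwS (h ▸ hskS)
      by_contra hno
      have hmk : ∀ p q : α, ¬ base.Adj p q →
          (s(p, q) = s(g u, k) ∨ s(p, q) = s(g u, g k) ∨ s(p, q) = s(u, g k) ∨
            s(p, q) = s(w, k) ∨ s(p, q) = s(w, g k)) → ¬ G'.Adj p q := by
        intro p q hnb hform hadj
        exact hno ⟨s(p, q), ⟨G'.mem_edgeSet.mpr hadj, fun hb => hnb (base.mem_edgeSet.mp hb)⟩, hform⟩
      have nb : ∀ p q : α, ¬ H.Adj p q → ¬ (p = u ∧ q = w) → ¬ (p = w ∧ q = u) →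
          ¬ base.Adj p q := by
        intro p q h1 h2 h3 hb
        rw [hbase_adj] at hb
        tauto
      have n1 : ¬ G'.Adj (g u) k :=
        hmk _ _ (nb _ _ (fun h => hku (((hfadj (g u) hsuS k hk).1 h).trans hfsu))
          (fun h => hsu_u h.1) (fun h => hsu_w h.1)) (Or.inl rfl)
      have n2 : ¬ G'.Adj (g u) (g k) :=
        hmk _ _ (nb _ _ (hS (g u) hsuS (g k) hskS)
          (fun h => hsu_u h.1) (fun h => hsu_w h.1)) (Or.inr (Or.inl rfl))
      have n3 : ¬ G'.Adj u (g k) :=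
        hmk _ _ (nb _ _ (fun h => hu_k (((hfadj (g k) hskS u hu).1 h.symm).trans hfsk))
          (fun h => hsk_w h.2) (fun h => huw h.1)) (Or.inr (Or.inr (Or.inl rfl)))
      have n4 : ¬ G'.Adj w k :=
        hmk _ _ (nb _ _ (hw k) (fun h => huw h.1.symm) (fun h => hku h.2))
          (Or.inr (Or.inr (Or.inr (Or.inl rfl))))
      have n5 : ¬ G'.Adj w (g k) :=
        hmk _ _ (nb _ _ (hw (g k)) (fun h => huw h.1.symm) (fun h => hu_sk h.2.symm))
          (Or.inr (Or.inr (Or.inr (Or.inr rfl))))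
      have a1 : G'.Adj (g u) u := hle ((hbase_adj _ _).2 (Or.inl ((hfadj (g u) hsuS u hu).2 hfsu.symm)))
      have a2 : G'.Adj u k := hle ((hbase_adj _ _).2 (Or.inl (hK hu hk hu_k)))
      have a3 : G'.Adj k (g k) :=
        hle ((hbase_adj _ _).2 (Or.inl ((hfadj (g k) hskS k hk).2 hfsk.symm).symm))
      have a4 : G'.Adj w u := hle ((hbase_adj _ _).2 (Or.inr (Or.inr ⟨rfl, rfl⟩)))
      have p1 : IsInducedP4 G' (g u) u k (g k) :=
        ⟨hsu_u, hsu_k, hsu_sk, hu_k, hu_sk, hk_sk, a1, a2, a3, n1, n2, n3⟩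
      have p2 : IsInducedP4 G' w u k (g k) :=
        ⟨Ne.symm huw, Ne.symm hk_w, Ne.symm hsk_w, hu_k, hu_sk, hk_sk, a4, a2, a3, n4, n5, n3⟩
      have h5 : ({g u, u, k, g k, w} : Set α).ncard = 5 :=
        ncard5 hsu_u hsu_k hsu_sk hsu_w hu_k hu_sk huw hk_sk hk_w hsk_w
      have heq := hsp {g u, u, k, g k, w} h5 {g u, u, k, g k}
        (by intro p hp; simp only [Set.mem_insert_iff, Set.mem_singleton_iff] at hp ⊢; tauto)
        {w, u, k, g k}
        (by intro p hp; simp only [Set.mem_insert_iff, Set.mem_singleton_iff] at hp ⊢; tauto)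
        ⟨g u, u, k, g k, rfl, p1⟩ ⟨w, u, k, g k, rfl, p2⟩
      have hwmem2 : w ∈ ({g u, u, k, g k} : Set α) := heq ▸ (by simp)
      rcases hwmem2 with h | h | h | h
      · exact hsu_w h.symm
      · exact huw h.symm
      · exact hk_w h.symm
      · exact hsk_w (Set.mem_singleton_iff.mp h).symm
    have key' : ∀ k : α, ∃ e : Sym2 α, (k ∈ K ∧ k ≠ u) → e ∈ G'.edgeSet \ base.edgeSet ∧
        (e = s(g u, k) ∨ e = s(g u, g k) ∨ e = s(u, g k) ∨ e = s(w, k) ∨ e = s(w, g k)) := by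
      intro k
      by_cases h : k ∈ K ∧ k ≠ u
      · obtain ⟨e, he1, he2⟩ := key k h.1 h.2
        exact ⟨e, fun _ => ⟨he1, he2⟩⟩
      · exact ⟨s(u, w), fun hh => absurd hh h⟩
    choose E hE using key'
    have hform : ∀ k, k ∈ K → k ≠ u → ∃ x y, (x = g u ∨ x = u ∨ x = w) ∧
        (y = k ∨ y = g k) ∧ E k = s(x, y) := by
      intro k hk hku
      rcases (hE k ⟨hk, hku⟩).2 with h | h | h | h | h
      · exact ⟨g u, k, Or.inl rfl, Or.inl rfl, h⟩
      · exact ⟨g u, g k, Or.inl rfl, Or.inr rfl, h⟩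
      · exact ⟨u, g k, Or.inr (Or.inl rfl), Or.inr rfl, h⟩
      · exact ⟨w, k, Or.inr (Or.inr rfl), Or.inl rfl, h⟩
      · exact ⟨w, g k, Or.inr (Or.inr rfl), Or.inr rfl, h⟩
    have hcount : (K \ {u}).ncard ≤ (G'.edgeSet \ base.edgeSet).ncard := by
      apply Set.ncard_le_ncard_of_injOn E
      · intro k hk
        simp only [Set.mem_diff, Set.mem_singleton_iff] at hk
        exact (hE k hk).1
      · intro k1 hk1' k2 hk2' he
        simp only [Set.mem_diff, Set.mem_singleton_iff] at hk1' hk2'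
        obtain ⟨hk1, hku1⟩ := hk1'
        obtain ⟨hk2, hku2⟩ := hk2'
        obtain ⟨x1, y1, hx1, hy1, hE1⟩ := hform k1 hk1 hku1
        obtain ⟨x2, y2, hx2, hy2, hE2⟩ := hform k2 hk2 hku2
        obtain ⟨hs1S, hf1⟩ := hg k1 hk1
        obtain ⟨hs2S, hf2⟩ := hg k2 hk2
        obtain ⟨hsuS, hfsu⟩ := hg u hu
        rw [hE1, hE2, Sym2.eq_iff] at he
        rcases he with ⟨hxx, hyy⟩ | ⟨hxy, hyx⟩
        · rcases hy1 with rfl | rfl <;> rcases hy2 with rfl | rfl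
          · exact hyy
          · exfalso; rw [← hyy] at hs2S; exact Set.disjoint_left.mp hSK hs2S hk1
          · exfalso; rw [hyy] at hs1S; exact Set.disjoint_left.mp hSK hs1S hk2
          · have := congrArg f hyy; rw [hf1, hf2] at this; exact this
        · exfalso
          rcases hx1 with rfl | rfl | rfl <;> rcases hy2 with rfl | rfl
          · rw [hxy] at hsuS; exact Set.disjoint_left.mp hSK hsuS hk2
          · have := congrArg f hxy; rw [hfsu, hf2] at this; exact hku2 this.symm
          · exact hku2 hxy.symm
          · rw [← hxy] at hs2S; exact Set.disjoint_left.mp hSK hs2S hu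
          · rw [← hxy] at hk2; exact hwK hk2
          · rw [← hxy] at hs2S; exact hwS hs2S
    show K.ncard - 1 ≤ fillCount base G'
    rw [← Set.ncard_diff_singleton_of_mem hu]
    exact hcount
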